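/- The group F₂ × Z (the direct product of a free group of rank 2 with the integers) does not satisfy Howson's property: it has two finitely generated subgroups whose intersection is not finitely generated. -/

import Mathlib

open Multiplicative SemidirectProduct

theorem notFG : ¬ AddGroup.FG (ℤ →₀ ℤ) := by
  intro h
  have h2 : Module.Finite ℤ (ℤ →₀ ℤ) := Module.Finite.iff_addGroup_fg.mpr h
  have h3 := Module.rank_lt_aleph0 ℤ (ℤ →₀ ℤ)
  rw [rank_finsupp_self'] at h3
  simp [Cardinal.mk_int] at h3

noncomputable def act : Multiplicative ℤ →* MulAut (Multiplicative (ℤ →₀ ℤ)) where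
  toFun n := AddEquiv.toMultiplicative (Finsupp.domCongr (Equiv.addLeft n.toAdd))
  map_one' := by
    apply MulEquiv.ext; intro f
    refine congrArg ofAdd ?_
    show Finsupp.equivMapDomain _ (toAdd f) = toAdd f
    rw [show Equiv.addLeft (toAdd (1 : Multiplicative ℤ)) = Equiv.refl ℤ from
      Equiv.ext fun x => by simp, Finsupp.equivMapDomain_refl]
  map_mul' m n := by
    apply MulEquiv.ext; intro f
    refine congrArg ofAdd ?_
    show Finsupp.equivMapDomain _ (toAdd f) =
      Finsupp.equivMapDomain _ (Finsupp.equivMapDomain _ (toAdd f))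
    rw [← Finsupp.equivMapDomain_trans]
    congr 1
    exact Equiv.ext fun x => by simp [add_assoc]

theorem act_single (n : ℤ) :
    act (ofAdd n) (ofAdd (Finsupp.single 0 1)) = ofAdd (Finsupp.single n 1) := by
  show ofAdd (Finsupp.equivMapDomain (Equiv.addLeft ((ofAdd n).toAdd)) (Finsupp.single 0 1)) = _
  rw [Finsupp.equivMapDomain_single]
  norm_num

abbrev F2 := FreeGroup (Fin 2)

def phi : F2 →* Multiplicative ℤ :=
  FreeGroup.lift (fun i => if i = 0 then ofAdd (1:ℤ) else 1)

noncomputable def w : F2 →* (Multiplicative (ℤ →₀ ℤ) ⋊[act] Multiplicative ℤ) :=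
  FreeGroup.lift (fun i => if i = 0 then inr (ofAdd (1:ℤ))
    else inl (ofAdd (Finsupp.single 0 1)))

theorem rightHom_comp_w : rightHom.comp w = phi := by
  apply FreeGroup.ext_hom
  intro i
  by_cases h : i = 0 <;>
    simp [w, phi, h, rightHom_inr, rightHom_inl]

theorem w_gen (n : ℤ) :
    w ((FreeGroup.of 0)^n * FreeGroup.of 1 * (FreeGroup.of 0)^(-n)) =
      inl (ofAdd (Finsupp.single n 1)) := by
  have h0 : w (FreeGroup.of 0) = inr (ofAdd (1:ℤ)) := by simp [w]
  have h1 : w (FreeGroup.of 1) = inl (ofAdd (Finsupp.single 0 1)) := by simp [w]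
  have hp : ∀ m : ℤ, w ((FreeGroup.of 0)^m) = inr (ofAdd m) := by
    intro m
    rw [map_zpow, h0, ← map_zpow, ← ofAdd_zsmul]
    norm_num
  rw [map_mul, map_mul, hp, h1, hp, ← act_single n, inl_aut, ofAdd_neg]

theorem gen_mem_ker (n : ℤ) :
    (FreeGroup.of 0)^n * FreeGroup.of (1 : Fin 2) * (FreeGroup.of 0)^(-n) ∈ phi.ker := by
  have h1 : phi (FreeGroup.of 1) = 1 := by simp [phi]
  simp [MonoidHom.mem_ker, map_mul, map_zpow, h1]

theorem fg_map {G G' : Type*} [Group G] [Group G'] {P : Subgroup G} (h : P.FG)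
    (f : G →* G') : (P.map f).FG := by
  obtain ⟨S, hS⟩ := h
  exact (Subgroup.fg_iff _).mpr
    ⟨f '' S, by rw [← MonoidHom.map_closure, hS], S.finite_toSet.image f⟩

theorem map_ker : phi.ker.map w = (inl : Multiplicative (ℤ →₀ ℤ) →* _).range := by
  apply le_antisymm
  · rintro x ⟨y, hy, rfl⟩
    rw [range_inl_eq_ker_rightHom, MonoidHom.mem_ker, ← MonoidHom.comp_apply,
      rightHom_comp_w]
    exact hy
  · rintro x ⟨f, rfl⟩
    induction f using Finsupp.induction with
    | zero => exact one_mem _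
    | single_add a b g _ _ ih =>
      rw [show ((Finsupp.single a b + g : ℤ →₀ ℤ) : Multiplicative (ℤ →₀ ℤ))
        = ofAdd (Finsupp.single a b) * ofAdd g from rfl, map_mul]
      refine mul_mem ?_ ih
      have : ofAdd (Finsupp.single a b) = (ofAdd (Finsupp.single a (1:ℤ)))^b := by
        rw [← ofAdd_zsmul, Finsupp.smul_single, smul_eq_mul, mul_one]
      rw [this, map_zpow]
      refine zpow_mem ?_ b
      rw [← w_gen a]
      exact Subgroup.mem_map_of_mem w (gen_mem_ker a)

theorem ker_not_fg : ¬ phi.ker.FG := by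
  intro h
  have h1 : (inl : Multiplicative (ℤ →₀ ℤ) →* _).range.FG := map_ker ▸ fg_map h w
  have h2 : Group.FG (inl : Multiplicative (ℤ →₀ ℤ) →*
      Multiplicative (ℤ →₀ ℤ) ⋊[act] Multiplicative ℤ).range :=
    (Group.fg_iff_subgroup_fg _).mpr h1
  have e := (MonoidHom.ofInjective (inl_injective (φ := act))).symm
  have h3 : Group.FG (Multiplicative (ℤ →₀ ℤ)) :=
    Group.fg_of_surjective (f := e.toMonoidHom) e.surjective
  exact notFG (AddGroup.fg_iff_mul_fg.mpr h3)

/-- `F₂ × ℤ` does not satisfy Howson's property: it has two finitely generated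
subgroups whose intersection is not finitely generated. -/
theorem stmt1 :
    ∃ H K : Subgroup (FreeGroup (Fin 2) × Multiplicative ℤ),
      H.FG ∧ K.FG ∧ ¬ (H ⊓ K).FG := by
  have topfg : (⊤ : Subgroup F2).FG :=
    (Subgroup.fg_iff _).mpr ⟨Set.range FreeGroup.of, FreeGroup.closure_range_of _,
      Set.finite_range _⟩
  set ψ : F2 →* F2 × Multiplicative ℤ := (MonoidHom.id F2).prod phi with hψ
  set j : F2 →* F2 × Multiplicative ℤ := MonoidHom.inl F2 (Multiplicative ℤ) with hj
  refine ⟨ψ.range, j.range, ?_, ?_, ?_⟩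
  · rw [MonoidHom.range_eq_map]; exact fg_map topfg ψ
  · rw [MonoidHom.range_eq_map]; exact fg_map topfg j
  · have key : ψ.range ⊓ j.range = phi.ker.map j := by
      ext ⟨x, y⟩
      simp only [Subgroup.mem_inf, MonoidHom.mem_range, Subgroup.mem_map,
        MonoidHom.mem_ker, hψ, hj, MonoidHom.prod_apply, MonoidHom.id_apply,
        MonoidHom.inl_apply, Prod.mk.injEq]
      constructor
      · rintro ⟨⟨v, hv1, hv2⟩, ⟨u, hu1, hu2⟩⟩
        exact ⟨x, by rw [← hv1, hv2, ← hu2], rfl, hu2⟩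
      · rintro ⟨v, hv, rfl, hy⟩
        exact ⟨⟨v, rfl, hv.trans hy⟩, ⟨v, rfl, hy⟩⟩
    rw [key]
    intro hfg
    apply ker_not_fg
    have := fg_map hfg (MonoidHom.fst F2 (Multiplicative ℤ))
    rwa [Subgroup.map_map, MonoidHom.fst_comp_inl, Subgroup.map_id] at this
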